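/- Let H be a separable Hilbert space and T a compact operator on H with singular value sequence μ(k,T) = inf{‖T − R‖ : rank R ≤ k}. If T ∈ L_{p,∞} and S ∈ L_{q,∞} (i.e. μ(k,T) ≤ C₁(k+1)^{−1/p} and μ(k,S) ≤ C₂(k+1)^{−1/q}), then TS ∈ L_{r,∞} where 1/r = 1/p + 1/q, with ‖TS‖_{r,∞} ≤ c_{p,q} ‖T‖_{p,∞} ‖S‖_{q,∞} for a constant c_{p,q} depending only on p and q. -/
import Mathlib

/-- The `k`-th singular value (approximation number) of a bounded operator:
`μ(k,T) = inf{‖T − R‖ : rank R ≤ k}`. -/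
noncomputable def singValue {H : Type*} [NormedAddCommGroup H] [InnerProductSpace ℂ H]
    (k : ℕ) (T : H →L[ℂ] H) : ℝ :=
  sInf {c : ℝ | ∃ R : H →L[ℂ] H,
    Module.rank ℂ (LinearMap.range (R : H →ₗ[ℂ] H)) ≤ (k : Cardinal) ∧ ‖T - R‖ = c}

section aux

variable {H : Type*} [NormedAddCommGroup H] [InnerProductSpace ℂ H]

lemma singSet_nonempty (k : ℕ) (T : H →L[ℂ] H) :
    {c : ℝ | ∃ R : H →L[ℂ] H,
      Module.rank ℂ (LinearMap.range (R : H →ₗ[ℂ] H)) ≤ (k : Cardinal) ∧ ‖T - R‖ = c}.Nonempty := by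
  refine ⟨‖T‖, 0, ?_, by simp⟩
  simp

lemma singSet_bddBelow (k : ℕ) (T : H →L[ℂ] H) :
    BddBelow {c : ℝ | ∃ R : H →L[ℂ] H,
      Module.rank ℂ (LinearMap.range (R : H →ₗ[ℂ] H)) ≤ (k : Cardinal) ∧ ‖T - R‖ = c} := by
  refine ⟨0, fun c hc => ?_⟩
  obtain ⟨R, -, rfl⟩ := hc
  exact norm_nonneg _

lemma singValue_nonneg (k : ℕ) (T : H →L[ℂ] H) : 0 ≤ singValue k T := by
  apply Real.sInf_nonneg
  rintro c ⟨R, -, rfl⟩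
  exact norm_nonneg _

/-- Key singular value inequality: `μ(k, TS) ≤ μ(m,T) μ(m,S)` whenever `2m ≤ k`. -/
lemma singValue_comp_le (T S : H →L[ℂ] H) {m k : ℕ} (hmk : 2 * m ≤ k) :
    singValue k (T.comp S) ≤ singValue m T * singValue m S := by
  set a := singValue m T with ha
  set b := singValue m S with hb
  have ha0 : 0 ≤ a := singValue_nonneg m T
  have hb0 : 0 ≤ b := singValue_nonneg m S
  have key : ∀ ε > (0:ℝ), singValue k (T.comp S) ≤ (a + ε) * (b + ε) := by
    intro ε hε
    obtain ⟨c₁, hc₁mem, hc₁lt⟩ := Real.lt_sInf_add_pos (singSet_nonempty m T) hε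
    obtain ⟨c₂, hc₂mem, hc₂lt⟩ := Real.lt_sInf_add_pos (singSet_nonempty m S) hε
    obtain ⟨R₁, hR₁, rfl⟩ := hc₁mem
    obtain ⟨R₂, hR₂, rfl⟩ := hc₂mem
    set R : H →L[ℂ] H := R₁.comp S + (T - R₁).comp R₂ with hR
    have hsub : T.comp S - R = (T - R₁).comp (S - R₂) := by
      ext x
      simp only [hR, ContinuousLinearMap.coe_sub', Pi.sub_apply,
        ContinuousLinearMap.comp_apply, ContinuousLinearMap.add_apply,
        ContinuousLinearMap.sub_apply, map_sub]
      abel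
    have hrank : Module.rank ℂ (LinearMap.range (R : H →ₗ[ℂ] H)) ≤ (k : Cardinal) := by
      have hcoe : (R : H →ₗ[ℂ] H) =
          (R₁ : H →ₗ[ℂ] H).comp (S : H →ₗ[ℂ] H) +
          ((T : H →ₗ[ℂ] H) - (R₁ : H →ₗ[ℂ] H)).comp (R₂ : H →ₗ[ℂ] H) := by
        simp [hR, LinearMap.sub_comp]
      rw [hcoe]
      calc LinearMap.rank ((R₁ : H →ₗ[ℂ] H).comp (S : H →ₗ[ℂ] H) +
            ((T : H →ₗ[ℂ] H) - (R₁ : H →ₗ[ℂ] H)).comp (R₂ : H →ₗ[ℂ] H))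
          ≤ LinearMap.rank ((R₁ : H →ₗ[ℂ] H).comp (S : H →ₗ[ℂ] H)) +
            LinearMap.rank (((T : H →ₗ[ℂ] H) - (R₁ : H →ₗ[ℂ] H)).comp (R₂ : H →ₗ[ℂ] H)) :=
            LinearMap.rank_add_le _ _
        _ ≤ LinearMap.rank (R₁ : H →ₗ[ℂ] H) + LinearMap.rank (R₂ : H →ₗ[ℂ] H) :=
            add_le_add (LinearMap.rank_comp_le_left _ _) (LinearMap.rank_comp_le_right _ _)
        _ ≤ (m : Cardinal) + (m : Cardinal) := add_le_add hR₁ hR₂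
        _ = ((2 * m : ℕ) : Cardinal) := by push_cast; ring
        _ ≤ (k : Cardinal) := by exact_mod_cast Nat.cast_le.mpr hmk
    have hle : singValue k (T.comp S) ≤ ‖T.comp S - R‖ :=
      csInf_le (singSet_bddBelow k (T.comp S)) ⟨R, hrank, rfl⟩
    calc singValue k (T.comp S) ≤ ‖T.comp S - R‖ := hle
      _ = ‖(T - R₁).comp (S - R₂)‖ := by rw [hsub]
      _ ≤ ‖T - R₁‖ * ‖S - R₂‖ := ContinuousLinearMap.opNorm_comp_le _ _
      _ ≤ (a + ε) * (b + ε) :=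
          mul_le_mul hc₁lt.le hc₂lt.le (norm_nonneg _) (by positivity)
  have hcont : Filter.Tendsto (fun ε : ℝ => (a + ε) * (b + ε))
      (nhdsWithin 0 (Set.Ioi 0)) (nhds (a * b)) := by
    have h1 : Filter.Tendsto (fun ε : ℝ => (a + ε) * (b + ε)) (nhds 0)
        (nhds ((a + 0) * (b + 0))) := by
      exact ((continuous_const.add continuous_id).mul
        (continuous_const.add continuous_id)).tendsto 0
    simpa using h1.mono_left nhdsWithin_le_nhds
  exact ge_of_tendsto hcont (Filter.eventually_iff_exists_mem.mpr
    ⟨Set.Ioi 0, self_mem_nhdsWithin, fun ε hε => key ε hε⟩)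

end aux

/-- Weak-Schatten Hölder inequality: if `μ(k,T) ≤ C₁(k+1)^{-1/p}` and
`μ(k,S) ≤ C₂(k+1)^{-1/q}`, then `μ(k,TS) ≤ c_{p,q} C₁ C₂ (k+1)^{-1/r}` with
`1/r = 1/p + 1/q`, where `c_{p,q}` depends only on `p` and `q`. -/
theorem stmt_10 (p q r : ℝ) (hp : 0 < p) (hq : 0 < q) (hr : 1/r = 1/p + 1/q) :
    ∃ c : ℝ, 0 < c ∧
      ∀ (H : Type) [NormedAddCommGroup H] [InnerProductSpace ℂ H] [CompleteSpace H]
        [TopologicalSpace.SeparableSpace H] (T S : H →L[ℂ] H),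
        IsCompactOperator T → IsCompactOperator S →
        ∀ C₁ C₂ : ℝ, 0 ≤ C₁ → 0 ≤ C₂ →
        (∀ k : ℕ, singValue k T ≤ C₁ * ((k : ℝ) + 1) ^ (-(1/p))) →
        (∀ k : ℕ, singValue k S ≤ C₂ * ((k : ℝ) + 1) ^ (-(1/q))) →
        ∀ k : ℕ, singValue k (T.comp S) ≤ c * C₁ * C₂ * ((k : ℝ) + 1) ^ (-(1/r)) := by
  refine ⟨(2:ℝ) ^ (1/r), Real.rpow_pos_of_pos two_pos _, ?_⟩
  intro H _ _ _ _ T S _ _ C₁ C₂ hC₁ hC₂ hT hS k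
  set m := k / 2 with hm
  have hmk : 2 * m ≤ k := by omega
  have hk2m : (k : ℝ) + 1 ≤ 2 * ((m : ℝ) + 1) := by
    have : k ≤ 2 * m + 1 := by omega
    have := (Nat.cast_le (α := ℝ)).mpr this
    push_cast at this ⊢
    linarith
  have hm1 : (0:ℝ) < (m : ℝ) + 1 := by positivity
  have step1 : singValue k (T.comp S) ≤ singValue m T * singValue m S :=
    singValue_comp_le T S hmk
  have step2 : singValue m T * singValue m S ≤
      (C₁ * ((m : ℝ) + 1) ^ (-(1/p))) * (C₂ * ((m : ℝ) + 1) ^ (-(1/q))) :=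
    mul_le_mul (hT m) (hS m) (singValue_nonneg m S) (by positivity)
  have hrexp : ((m : ℝ) + 1) ^ (-(1/p)) * ((m : ℝ) + 1) ^ (-(1/q)) =
      ((m : ℝ) + 1) ^ (-(1/r)) := by
    rw [← Real.rpow_add hm1, hr]; ring_nf
  have step3 : ((m : ℝ) + 1) ^ (-(1/r)) ≤ (2:ℝ) ^ (1/r) * ((k : ℝ) + 1) ^ (-(1/r)) := by
    have hrneg : -(1/r) ≤ 0 := by
      rw [hr]; have : 0 < 1/p + 1/q := by positivity
      linarith
    have h1 : ((k : ℝ) + 1) ^ (-(1/r)) ≥ (2 * ((m : ℝ) + 1)) ^ (-(1/r)) :=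
      Real.rpow_le_rpow_of_nonpos (by positivity) hk2m hrneg
    have h2 : (2 * ((m : ℝ) + 1)) ^ (-(1/r)) =
        (2:ℝ) ^ (-(1/r)) * ((m : ℝ) + 1) ^ (-(1/r)) :=
      Real.mul_rpow (by norm_num) hm1.le
    have h2pos : (0:ℝ) < (2:ℝ) ^ (-(1/r)) := Real.rpow_pos_of_pos two_pos _
    rw [h2] at h1
    calc ((m : ℝ) + 1) ^ (-(1/r))
        = ((2:ℝ) ^ (-(1/r)))⁻¹ * ((2:ℝ) ^ (-(1/r)) * ((m : ℝ) + 1) ^ (-(1/r))) := by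
          field_simp
      _ ≤ ((2:ℝ) ^ (-(1/r)))⁻¹ * ((k : ℝ) + 1) ^ (-(1/r)) := by
          apply mul_le_mul_of_nonneg_left h1 (by positivity)
      _ = (2:ℝ) ^ (1/r) * ((k : ℝ) + 1) ^ (-(1/r)) := by
          rw [Real.rpow_neg (by norm_num : (0:ℝ) ≤ 2), inv_inv]
  calc singValue k (T.comp S)
      ≤ (C₁ * ((m : ℝ) + 1) ^ (-(1/p))) * (C₂ * ((m : ℝ) + 1) ^ (-(1/q))) :=
        step1.trans step2
    _ = C₁ * C₂ * (((m : ℝ) + 1) ^ (-(1/p)) * ((m : ℝ) + 1) ^ (-(1/q))) := by ring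
    _ = C₁ * C₂ * ((m : ℝ) + 1) ^ (-(1/r)) := by rw [hrexp]
    _ ≤ C₁ * C₂ * ((2:ℝ) ^ (1/r) * ((k : ℝ) + 1) ^ (-(1/r))) :=
        mul_le_mul_of_nonneg_left step3 (by positivity)
    _ = (2:ℝ) ^ (1/r) * C₁ * C₂ * ((k : ℝ) + 1) ^ (-(1/r)) := by ring
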